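/- Let (X,d) be a finite ultrametric space with no equilateral triangles (no three distinct points pairwise equidistant), and let x_1,...,x_n enumerate X so that the path x_1—...—x_n is a minimum weight spanning tree, with s_i = d(x_i,x_{i+1}). Then whenever s_i = s_j with i < j, there exists k with i < k < j and s_k > s_i. -/

import Mathlib

/-- The weight of an edge of the complete graph on a metric space. -/
noncomputable def edgeWeight (X : Type*) [MetricSpace X] : Sym2 X → ℝ :=
  Sym2.lift ⟨fun x y => dist x y, fun x y => dist_comm x y⟩

/-- The total weight of (the edges of) a graph on a finite metric space. -/
noncomputable def graphWeight {X : Type*} [MetricSpace X] [Fintype X]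
    (G : SimpleGraph X) : ℝ :=
  ∑ e ∈ G.edgeSet.toFinite.toFinset, edgeWeight X e

/-- A minimum weight spanning tree of the complete weighted graph on a finite
metric space `X` with weights given by the metric: a tree on the vertex set `X`
whose total weight is minimal among all such trees. -/
def IsMST {X : Type*} [MetricSpace X] [Fintype X] (T : SimpleGraph X) : Prop :=
  T.IsTree ∧ ∀ G : SimpleGraph X, G.IsTree → graphWeight T ≤ graphWeight G

/-- The path graph `x 0 — x 1 — ⋯ — x (n-1)` on `X`. -/
def pathGraphOn {X : Type*} (n : ℕ) (x : ℕ → X) : SimpleGraph X :=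
  SimpleGraph.fromRel (fun u v => ∃ i : ℕ, i + 1 < n ∧ u = x i ∧ v = x (i + 1))

open SimpleGraph

section Aux

/-- Reachability decomposition after adding a single edge. -/
theorem NoEquilateralAux.reach_sup_edge {V : Type*} {G : SimpleGraph V} {a b u v : V}
    (h : (G ⊔ edge a b).Reachable u v) :
    G.Reachable u v ∨ (G.Reachable u a ∧ G.Reachable b v) ∨
      (G.Reachable u b ∧ G.Reachable a v) := by
  obtain ⟨w⟩ := h
  induction w with
  | nil => exact Or.inl (Reachable.refl _)
  | @cons p q r h w ih =>
    rcases h with h | h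
    · rcases ih with h' | ⟨h1, h2⟩ | ⟨h1, h2⟩
      · exact Or.inl (h.reachable.trans h')
      · exact Or.inr (Or.inl ⟨h.reachable.trans h1, h2⟩)
      · exact Or.inr (Or.inr ⟨h.reachable.trans h1, h2⟩)
    · rw [edge_adj] at h
      obtain ⟨⟨rfl, rfl⟩ | ⟨rfl, rfl⟩, hne⟩ := h
      · rcases ih with h' | ⟨h1, h2⟩ | ⟨h1, h2⟩
        · exact Or.inr (Or.inl ⟨Reachable.refl _, h'⟩)
        · exact Or.inr (Or.inl ⟨Reachable.refl _, h2⟩)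
        · exact Or.inl h2
      · rcases ih with h' | ⟨h1, h2⟩ | ⟨h1, h2⟩
        · exact Or.inr (Or.inr ⟨Reachable.refl _, h'⟩)
        · exact Or.inl h2
        · exact Or.inr (Or.inr ⟨Reachable.refl _, h2⟩)

theorem NoEquilateralAux.isAcyclic_mono' {V : Type*} {G H : SimpleGraph V} (hle : G ≤ H)
    (h : H.IsAcyclic) : G.IsAcyclic := fun _ c hc => h (c.mapLe hle) (hc.mapLe hle)

open NoEquilateralAux in
/-- Adding an edge between two components of an acyclic graph keeps it acyclic. -/
theorem NoEquilateralAux.isAcyclic_sup_edge {V : Type*} {G : SimpleGraph V} {a b : V}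
    (hG : G.IsAcyclic) (hnr : ¬ G.Reachable a b) : (G ⊔ edge a b).IsAcyclic := by
  have hab : a ≠ b := fun h => hnr (h ▸ Reachable.refl a)
  rw [isAcyclic_iff_forall_edge_isBridge]
  intro e he
  induction e with
  | _ u v =>
  rw [isBridge_iff]
  rw [edgeSet_sup, Set.mem_union, edge_edgeSet_of_ne hab, Set.mem_singleton_iff] at he
  rcases he with he | he
  · -- old edge of G
    have huv : G.Adj u v := he
    have hne : s(a, b) ≠ s(u, v) := by
      intro h
      exact hnr (by rw [Sym2.eq_iff] at h
                    rcases h with ⟨rfl, rfl⟩ | ⟨rfl, rfl⟩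
                    exacts [huv.reachable, huv.symm.reachable])
    have hb : ¬(G \ fromEdgeSet {s(u, v)}).Reachable u v :=
      isBridge_iff.mp ((isAcyclic_iff_forall_edge_isBridge.mp hG) he)
    have hgeq : (G ⊔ edge a b) \ fromEdgeSet {s(u, v)}
        = (G \ fromEdgeSet {s(u, v)}) ⊔ edge a b := by
      ext p q
      simp only [sdiff_adj, sup_adj, edge_adj, fromEdgeSet_adj, Set.mem_singleton_iff]
      constructor
      · rintro ⟨hpq | hpq, hmem⟩
        · exact Or.inl ⟨hpq, hmem⟩
        · exact Or.inr hpq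
      · rintro (⟨hpq, hmem⟩ | hpq)
        · exact ⟨Or.inl hpq, hmem⟩
        · refine ⟨Or.inr hpq, ?_⟩
          rintro ⟨h1, -⟩
          rcases hpq.1 with ⟨rfl, rfl⟩ | ⟨rfl, rfl⟩
          · exact hne h1
          · exact hne (Sym2.eq_swap.trans h1)
    show ¬((G ⊔ edge a b) \ fromEdgeSet {s(u, v)}).Reachable u v
    · rw [hgeq]
      intro hr
      rcases reach_sup_edge hr with h' | ⟨h1, h2⟩ | ⟨h1, h2⟩
      · exact hb h'
      · exact hnr ((h1.mono sdiff_le).symm.trans (huv.reachable.trans (h2.mono sdiff_le).symm))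
      · exact hnr ((h2.mono sdiff_le).trans (huv.reachable.symm.trans (h1.mono sdiff_le)))
  · -- the new edge
    have hadj : (G ⊔ edge a b).Adj u v := by
      refine Or.inr ?_
      rw [edge_adj]
      rw [Sym2.eq_iff] at he
      rcases he with ⟨rfl, rfl⟩ | ⟨rfl, rfl⟩
      exacts [⟨Or.inl ⟨rfl, rfl⟩, hab⟩, ⟨Or.inr ⟨rfl, rfl⟩, hab.symm⟩]
    show ¬((G ⊔ edge a b) \ fromEdgeSet {s(u, v)}).Reachable u v
    have hle : (G ⊔ edge a b) \ fromEdgeSet {s(u, v)} ≤ G := by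
      intro p q hpq
      rcases hpq.1 with h' | h'
      · exact h'
      · exfalso
        apply hpq.2
        rw [fromEdgeSet_adj, Set.mem_singleton_iff]
        rw [edge_adj] at h'
        refine ⟨?_, h'.2⟩
        rw [he]
        rcases h'.1 with ⟨rfl, rfl⟩ | ⟨rfl, rfl⟩
        · rfl
        · exact Sym2.eq_swap
    intro hr
    rw [Sym2.eq_iff] at he
    rcases he with ⟨rfl, rfl⟩ | ⟨rfl, rfl⟩
    · exact hnr (hr.mono hle)
    · exact hnr (hr.mono hle).symm

open NoEquilateralAux in
/-- The MST exchange inequality: if `u v` is an edge of a minimum spanning tree `T`,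
and `a`, `b` are connected to `u`, `v` respectively after deleting this edge,
then `dist u v ≤ dist a b`. -/
theorem NoEquilateralAux.mst_exchange {X : Type*} [MetricSpace X] [Fintype X]
    {T : SimpleGraph X} (hmst : IsMST T) {u v a b : X} (huv : T.Adj u v)
    (ha : (T \ edge u v).Reachable a u) (hb : (T \ edge u v).Reachable b v) :
    dist u v ≤ dist a b := by
  classical
  set T₀ := T \ edge u v with hT₀
  have hbr : ¬T₀.Reachable u v := by
    have := (isAcyclic_iff_forall_edge_isBridge.mp hmst.1.IsAcyclic) (T.mem_edgeSet.mpr huv)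
    exact isBridge_iff.mp this
  have hnrab : ¬T₀.Reachable a b := fun h => hbr (ha.symm.trans (h.trans hb))
  have hne_ab : a ≠ b := fun h => hnrab (h ▸ Reachable.refl a)
  set T' := T₀ ⊔ edge a b with hT'
  have hTeq : T₀ ⊔ edge u v = T := by
    apply sdiff_sup_cancel
    intro p q hpq
    rw [edge_adj] at hpq
    rcases hpq.1 with ⟨rfl, rfl⟩ | ⟨rfl, rfl⟩
    exacts [huv, huv.symm]
  have hacyc : T'.IsAcyclic :=
    isAcyclic_sup_edge (isAcyclic_mono' sdiff_le hmst.1.IsAcyclic) hnrab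
  have hTadj : T'.Adj a b := by
    refine Or.inr ?_
    rw [edge_adj]
    exact ⟨Or.inl ⟨rfl, rfl⟩, hne_ab⟩
  have hconn : T'.Connected := by
    rw [connected_iff]
    refine ⟨fun w z => ?_, ⟨u⟩⟩
    have key : ∀ p : X, T'.Reachable p b := by
      intro p
      have hpu : T.Reachable p u := hmst.1.isConnected.preconnected p u
      rw [← hTeq] at hpu
      have : T₀.Reachable p u ∨ T₀.Reachable p v := by
        rcases reach_sup_edge hpu with h' | ⟨h1, _⟩ | ⟨h1, _⟩
        exacts [Or.inl h', Or.inl h1, Or.inr h1]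
      rcases this with h' | h'
      · exact ((h'.trans ha.symm).mono le_sup_left).trans hTadj.reachable
      · exact (h'.trans hb.symm).mono le_sup_left
    exact (key w).trans (key z).symm
  have hsab_not : s(a, b) ∉ T₀.edgeSet := fun h => hnrab (Adj.reachable h)
  have hset : T'.edgeSet = insert s(a, b) (T.edgeSet \ {s(u, v)}) := by
    rw [hT', edgeSet_sup, edge_edgeSet_of_ne hne_ab, hT₀, edgeSet_sdiff,
      edge_edgeSet_of_ne huv.ne, Set.union_singleton]
  have hT0set : T₀.edgeSet = T.edgeSet \ {s(u, v)} := by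
    rw [hT₀, edgeSet_sdiff, edge_edgeSet_of_ne huv.ne]
  have hmemF : s(u, v) ∈ T.edgeSet.toFinite.toFinset := by
    rw [Set.Finite.mem_toFinset]; exact T.mem_edgeSet.mpr huv
  have hfin : T'.edgeSet.toFinite.toFinset
      = insert s(a, b) (T.edgeSet.toFinite.toFinset.erase s(u, v)) := by
    ext e
    simp only [Set.Finite.mem_toFinset, hset, Set.mem_insert_iff, Set.mem_diff,
      Set.mem_singleton_iff, Finset.mem_insert, Finset.mem_erase]
    tauto
  have hnotmem : s(a, b) ∉ T.edgeSet.toFinite.toFinset.erase s(u, v) := by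
    rw [Finset.mem_erase, Set.Finite.mem_toFinset]
    rintro ⟨hne, hmem⟩
    exact hsab_not (by rw [hT0set]; exact ⟨hmem, hne⟩)
  have hw : graphWeight T' = dist a b + (graphWeight T - dist u v) := by
    rw [graphWeight, hfin, Finset.sum_insert hnotmem, Finset.sum_erase_eq_sub hmemF,
      graphWeight]
    simp [edgeWeight]
  have hle := hmst.2 T' ⟨hconn, hacyc⟩
  rw [hw] at hle
  linarith

end Aux

open NoEquilateralAux in
/-- Proposition 3.2 (i)⇒(ii): in a finite ultrametric space with no equilateral
triangles, whenever two edge weights of a minimum spanning path coincide, a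
strictly larger weight occurs between them. -/
theorem no_equilateral_spanning_path {X : Type*} [MetricSpace X] [Fintype X]
    (hu : ∀ x y z : X, dist x y ≤ max (dist x z) (dist z y))
    (hneq : ∀ a b c : X, a ≠ b → b ≠ c → a ≠ c →
      ¬ (dist a b = dist b c ∧ dist b c = dist a c))
    (n : ℕ) (x : ℕ → X)
    (hbij : Function.Bijective fun i : Fin n => x i.val)
    (hmst : IsMST (pathGraphOn n x))
    (s : ℕ → ℝ) (hs : ∀ i : ℕ, i + 1 < n → s i = dist (x i) (x (i + 1)))
    (i j : ℕ) (hij : i < j) (hj : j + 1 < n) (heq : s i = s j) :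
    ∃ k : ℕ, i < k ∧ k < j ∧ s i < s k := by
  by_contra hcon
  push_neg at hcon
  -- injectivity on indices < n
  have hinj : ∀ {k l : ℕ}, k < n → l < n → x k = x l → k = l := by
    intro k l hk hl h
    have := hbij.1 (a₁ := ⟨k, hk⟩) (a₂ := ⟨l, hl⟩) h
    exact congrArg Fin.val this
  set T := pathGraphOn n x with hT
  -- adjacency of consecutive vertices
  have hadjT : ∀ k, k + 1 < n → T.Adj (x k) (x (k + 1)) := by
    intro k hk
    rw [hT, pathGraphOn, fromRel_adj]
    exact ⟨fun h => absurd (hinj (by omega) hk h) (by omega), Or.inl ⟨k, hk, rfl, rfl⟩⟩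
  set T₀ := T \ edge (x j) (x (j + 1)) with hT₀
  -- consecutive edges other than the `j`-th survive in `T₀`
  have hT0adj : ∀ k, k + 1 < n → k ≠ j → T₀.Adj (x k) (x (k + 1)) := by
    intro k hk hkj
    rw [hT₀, sdiff_adj]
    refine ⟨hadjT k hk, ?_⟩
    rw [edge_adj]
    rintro ⟨⟨h1, h2⟩ | ⟨h1, h2⟩, -⟩
    · exact hkj (hinj (by omega) (by omega) h1)
    · have e1 : k = j + 1 := hinj (by omega) hj h1
      have e2 : k + 1 = j := hinj hk (by omega) h2
      omega
  -- chain reachability in T₀ along an interval avoiding j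
  have hchain : ∀ k l : ℕ, k ≤ l → l < n → (∀ t, k ≤ t → t < l → t ≠ j) →
      T₀.Reachable (x k) (x l) := by
    intro k l hkl
    induction l, hkl using Nat.le_induction with
    | base => intro _ _; exact Reachable.refl _
    | succ l hkl ih =>
      intro hln ht
      refine (ih (by omega) fun t h1 h2 => ht t h1 (by omega)).trans ?_
      exact (hT0adj l hln (ht l hkl (by omega))).reachable
  -- ultrametric chain upper bound
  have hub : ∀ (C : ℝ) (k l : ℕ), k + 1 ≤ l → l < n →
      (∀ t, k ≤ t → t + 1 ≤ l → dist (x t) (x (t + 1)) ≤ C) → dist (x k) (x l) ≤ C := by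
    intro C k l hkl
    induction l, hkl using Nat.le_induction with
    | base => intro _ ht; exact ht k le_rfl le_rfl
    | succ l hkl ih =>
      intro hln ht
      refine le_trans (hu (x k) (x (l + 1)) (x l)) (max_le ?_ ?_)
      · exact ih (by omega) fun t h1 h2 => ht t h1 (by omega)
      · exact ht l (by omega) le_rfl
  have hi1n : i + 1 < n := by omega
  -- all steps between i and j are bounded by s i
  have hstep : ∀ t, i ≤ t → t ≤ j → dist (x t) (x (t + 1)) ≤ s i := by
    intro t h1 h2
    rcases eq_or_lt_of_le h1 with rfl | h1'
    · exact ((hs i hi1n).symm).le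
    · rcases eq_or_lt_of_le h2 with rfl | h2'
      · exact ((heq.trans (hs t hj)).symm).le
      · rw [← hs t (by omega)]
        exact hcon t h1' h2'
  have hub1 : dist (x i) (x (j + 1)) ≤ s i :=
    hub (s i) i (j + 1) (by omega) hj fun t h1 h2 => hstep t h1 (by omega)
  have hub2 : dist (x (i + 1)) (x (j + 1)) ≤ s i :=
    hub (s i) (i + 1) (j + 1) (by omega) hj fun t h1 h2 => hstep t (by omega) (by omega)
  have hadj : T.Adj (x j) (x (j + 1)) := hadjT j hj
  have hb0 : T₀.Reachable (x (j + 1)) (x (j + 1)) := Reachable.refl _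
  have ha1 : T₀.Reachable (x i) (x j) :=
    hchain i j (by omega) (by omega) fun t _ h2 => by omega
  have ha2 : T₀.Reachable (x (i + 1)) (x j) :=
    hchain (i + 1) j (by omega) (by omega) fun t _ h2 => by omega
  have hlb1 : dist (x j) (x (j + 1)) ≤ dist (x i) (x (j + 1)) :=
    mst_exchange hmst hadj ha1 hb0
  have hlb2 : dist (x j) (x (j + 1)) ≤ dist (x (i + 1)) (x (j + 1)) :=
    mst_exchange hmst hadj ha2 hb0
  have hsj : s i = dist (x j) (x (j + 1)) := heq.trans (hs j hj)
  have hd1 : dist (x i) (x (j + 1)) = s i := le_antisymm hub1 (hsj ▸ hlb1)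
  have hd2 : dist (x (i + 1)) (x (j + 1)) = s i := le_antisymm hub2 (hsj ▸ hlb2)
  have hne1 : x i ≠ x (i + 1) := fun h => by have := hinj (by omega) (by omega) h; omega
  have hne2 : x (i + 1) ≠ x (j + 1) := fun h => by have := hinj (by omega) (by omega) h; omega
  have hne3 : x i ≠ x (j + 1) := fun h => by have := hinj (by omega) (by omega) h; omega
  exact hneq (x i) (x (i + 1)) (x (j + 1)) hne1 hne2 hne3
    ⟨(hs i hi1n).symm.trans hd2.symm, hd2.trans hd1.symm⟩
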